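/- Let k : ℝ^d → ℝ be a measurable function with 0 ≤ k(w) ≤ M for all w ∈ ℝ^d, and let g be its Gaussian smoothing with parameter σ > 0. Then g is differentiable on ℝ^d and its gradient admits the score-function representation ∇g(μ) = ∫_{ℝ^d} (2πσ²)^{−d/2} exp(−‖w − μ‖²/(2σ²)) · ((w − μ)/σ²) · k(w) dw. -/

import Mathlib

set_option synthInstance.maxHeartbeats 1000000
set_option maxHeartbeats 1000000

open MeasureTheory Real

/-- The Gaussian smoothing of `k : ℝ^d → ℝ` with parameter `σ`:
`g(μ) = ∫ (2πσ²)^(−d/2) · exp(−‖w − μ‖²/(2σ²)) · k(w) dw = E_{w ∼ N(μ, σ²I)}[k(w)]`. -/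
noncomputable def gaussSmooth (d : ℕ) (σ : ℝ) (k : EuclideanSpace ℝ (Fin d) → ℝ) :
    EuclideanSpace ℝ (Fin d) → ℝ :=
  fun μ => ∫ w, (2 * π * σ ^ 2) ^ (-(d : ℝ) / 2) * Real.exp (-‖w - μ‖ ^ 2 / (2 * σ ^ 2)) * k w


-- integrability of a centered Gaussian on Euclidean space
lemma auxGaussInt (d : ℕ) {b : ℝ} (hb : 0 < b) (x₀ : EuclideanSpace ℝ (Fin d)) :
    Integrable (fun w : EuclideanSpace ℝ (Fin d) => rexp (-(b * ‖w - x₀‖ ^ 2))) := by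
  have h := (GaussianFourier.integrable_cexp_neg_mul_sq_norm_add
    (V := EuclideanSpace ℝ (Fin d)) (b := (b : ℂ)) (by simpa using hb) 0 0).norm
  have h2 : Integrable (fun v : EuclideanSpace ℝ (Fin d) => rexp (-(b * ‖v‖ ^ 2))) := by
    convert h using 2 with v
    simp [Complex.norm_exp]
    left; norm_cast
  exact h2.comp_sub_right x₀

lemma auxPoly (σ : ℝ) (hσ : 0 < σ) {a : ℝ} (ha : 0 ≤ a) :
    (a + 1) * rexp (-(a ^ 2 / (8 * σ ^ 2))) ≤ 2 + 16 * σ ^ 2 := by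
  rcases le_total a 1 with h | h
  · have h1 : rexp (-(a ^ 2 / (8 * σ ^ 2))) ≤ 1 := by
      rw [Real.exp_le_one_iff]
      have : 0 ≤ a ^ 2 / (8 * σ ^ 2) := by positivity
      linarith
    nlinarith [Real.exp_pos (-(a ^ 2 / (8 * σ ^ 2))), sq_nonneg σ]
  · have h8 : 0 < a ^ 2 / (8 * σ ^ 2) := by positivity
    have hle := Real.add_one_le_exp (a ^ 2 / (8 * σ ^ 2))
    have he : rexp (-(a ^ 2 / (8 * σ ^ 2))) ≤ (a ^ 2 / (8 * σ ^ 2))⁻¹ := by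
      rw [Real.exp_neg]
      exact inv_anti₀ h8 (by linarith)
    have h2 : (a ^ 2 / (8 * σ ^ 2))⁻¹ = 8 * σ ^ 2 / a ^ 2 := by
      rw [inv_div]
    have ha2 : (0:ℝ) < a ^ 2 := by nlinarith
    have h3 : (a + 1) * (8 * σ ^ 2 / a ^ 2) ≤ 16 * σ ^ 2 := by
      have e : (a + 1) * (8 * σ ^ 2 / a ^ 2) = (a + 1) * 8 * σ ^ 2 / a ^ 2 := by ring
      rw [e, div_le_iff₀ ha2]
      nlinarith [mul_nonneg (mul_nonneg (by positivity : (0:ℝ) ≤ σ ^ 2)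
        (by linarith : (0:ℝ) ≤ a - 1)) (by linarith : (0:ℝ) ≤ 2 * a + 1)]
    calc (a + 1) * rexp (-(a ^ 2 / (8 * σ ^ 2)))
        ≤ (a + 1) * (8 * σ ^ 2 / a ^ 2) := by
          rw [← h2]; exact mul_le_mul_of_nonneg_left he (by linarith)
      _ ≤ 16 * σ ^ 2 := h3
      _ ≤ 2 + 16 * σ ^ 2 := by linarith

lemma auxChain (σ : ℝ) (hσ : 0 < σ) {a r : ℝ} (ha : 0 ≤ a) (hr : 0 ≤ r)
    (h1 : a - 1 ≤ r) (h2 : r ≤ a + 1) :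
    rexp (-r ^ 2 / (2 * σ ^ 2)) * r ≤
      rexp (1 / σ ^ 2) * (2 + 16 * σ ^ 2) * rexp (-((8 * σ ^ 2)⁻¹ * a ^ 2)) := by
  have hσ2 : (0:ℝ) < σ ^ 2 := by positivity
  have hsq : a ^ 2 - 2 * a ≤ r ^ 2 := by nlinarith [mul_nonneg (sub_nonneg.2 h1) hr]
  have e1 : rexp (-r ^ 2 / (2 * σ ^ 2)) * r ≤ rexp ((2 * a - a ^ 2) / (2 * σ ^ 2)) * (a + 1) := by
    apply mul_le_mul _ h2 hr (Real.exp_nonneg _)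
    apply Real.exp_le_exp.2
    apply div_le_div_of_nonneg_right _ (by positivity)
    · linarith
  have e2 : (2 * a - a ^ 2) / (2 * σ ^ 2) =
      (a / σ ^ 2 - a ^ 2 / (4 * σ ^ 2)) + (-(a ^ 2 / (8 * σ ^ 2))) + (-((8 * σ ^ 2)⁻¹ * a ^ 2)) := by
    field_simp
    ring
  have e3 : a / σ ^ 2 - a ^ 2 / (4 * σ ^ 2) ≤ 1 / σ ^ 2 := by
    rw [div_sub_div _ _ (by positivity) (by positivity : (4:ℝ) * σ ^ 2 ≠ 0)]
    rw [div_le_div_iff₀ (by positivity) (by positivity)]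
    nlinarith [mul_nonneg (mul_pos hσ2 hσ2).le (sq_nonneg (a - 2))]
  calc rexp (-r ^ 2 / (2 * σ ^ 2)) * r
      ≤ rexp ((2 * a - a ^ 2) / (2 * σ ^ 2)) * (a + 1) := e1
    _ = rexp (a / σ ^ 2 - a ^ 2 / (4 * σ ^ 2)) * ((a + 1) * rexp (-(a ^ 2 / (8 * σ ^ 2)))) *
          rexp (-((8 * σ ^ 2)⁻¹ * a ^ 2)) := by
        rw [e2, Real.exp_add, Real.exp_add]; ring
    _ ≤ rexp (1 / σ ^ 2) * (2 + 16 * σ ^ 2) * rexp (-((8 * σ ^ 2)⁻¹ * a ^ 2)) := by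
        apply mul_le_mul_of_nonneg_right _ (Real.exp_nonneg _)
        exact mul_le_mul (Real.exp_le_exp.2 e3) (auxPoly σ hσ ha)
          (mul_nonneg (by linarith) (Real.exp_nonneg _)) (Real.exp_nonneg _)

theorem stmt_9 (d : ℕ) (hd : 1 ≤ d) (σ M : ℝ) (hσ : 0 < σ) (hM : 0 < M)
    (k : EuclideanSpace ℝ (Fin d) → ℝ) (hmeas : Measurable k)
    (hk0 : ∀ w, 0 ≤ k w) (hkM : ∀ w, k w ≤ M)
    (g : EuclideanSpace ℝ (Fin d) → ℝ) (hg : g = gaussSmooth d σ k) :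
    Differentiable ℝ g ∧ ∀ μ : EuclideanSpace ℝ (Fin d),
      gradient g μ =
        ∫ w : EuclideanSpace ℝ (Fin d),
          ((2 * π * σ ^ 2) ^ (-(d : ℝ) / 2) * Real.exp (-‖w - μ‖ ^ 2 / (2 * σ ^ 2)) * k w) •
            ((σ ^ 2)⁻¹ • (w - μ)) := by
  subst hg
  set c : ℝ := (2 * π * σ ^ 2) ^ (-(d : ℝ) / 2) with hc
  have hc0 : 0 < c := Real.rpow_pos_of_pos (by positivity) _
  have hσ2 : (0:ℝ) < σ ^ 2 := by positivity
  set F' : EuclideanSpace ℝ (Fin d) → EuclideanSpace ℝ (Fin d) →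
      EuclideanSpace ℝ (Fin d) →L[ℝ] ℝ := fun x w =>
    (c * rexp (-‖w - x‖ ^ 2 / (2 * σ ^ 2)) * k w * (σ ^ 2)⁻¹) • (innerSL ℝ (w - x)) with hF'
  have hcont : ∀ x : EuclideanSpace ℝ (Fin d),
      Continuous fun w : EuclideanSpace ℝ (Fin d) =>
        c * rexp (-‖w - x‖ ^ 2 / (2 * σ ^ 2)) := by
    intro x; fun_prop
  have hFmeas : ∀ x : EuclideanSpace ℝ (Fin d), AEStronglyMeasurable
      (fun w : EuclideanSpace ℝ (Fin d) =>
        c * rexp (-‖w - x‖ ^ 2 / (2 * σ ^ 2)) * k w) volume :=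
    fun x => ((hcont x).measurable.mul hmeas).aestronglyMeasurable
  have hF'meas : ∀ x : EuclideanSpace ℝ (Fin d),
      AEStronglyMeasurable (fun w => F' x w) volume := by
    intro x
    apply AEStronglyMeasurable.smul (f := fun w => c * rexp (-‖w - x‖ ^ 2 / (2 * σ ^ 2)) * k w * (σ ^ 2)⁻¹)
      (g := fun w => innerSL ℝ (w - x))
    · exact (((hcont x).measurable.mul hmeas).mul_const _).aestronglyMeasurable
    · exact ((innerSL ℝ (E := EuclideanSpace ℝ (Fin d))).continuous.comp
        (continuous_id.sub continuous_const)).aestronglyMeasurable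
  have hexp_eq : ∀ x w : EuclideanSpace ℝ (Fin d),
      -‖w - x‖ ^ 2 / (2 * σ ^ 2) = -((2 * σ ^ 2)⁻¹ * ‖w - x‖ ^ 2) := by
    intro x w; field_simp
  have hFint : ∀ x : EuclideanSpace ℝ (Fin d), Integrable
      (fun w : EuclideanSpace ℝ (Fin d) =>
        c * rexp (-‖w - x‖ ^ 2 / (2 * σ ^ 2)) * k w) volume := by
    intro x
    apply Integrable.mono'
      ((auxGaussInt d (b := (2 * σ ^ 2)⁻¹) (by positivity) x).const_mul (c * M)) (hFmeas x)
    filter_upwards with w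
    rw [Real.norm_eq_abs,
      abs_of_nonneg (mul_nonneg (mul_nonneg hc0.le (Real.exp_nonneg _)) (hk0 w)),
      ← hexp_eq x w]
    calc c * rexp (-‖w - x‖ ^ 2 / (2 * σ ^ 2)) * k w
        ≤ c * rexp (-‖w - x‖ ^ 2 / (2 * σ ^ 2)) * M :=
          mul_le_mul_of_nonneg_left (hkM w) (by positivity)
      _ = c * M * rexp (-‖w - x‖ ^ 2 / (2 * σ ^ 2)) := by ring
  -- norm of F'
  have hF'norm : ∀ x w : EuclideanSpace ℝ (Fin d),
      ‖F' x w‖ = c * rexp (-‖w - x‖ ^ 2 / (2 * σ ^ 2)) * k w * (σ ^ 2)⁻¹ * ‖w - x‖ := by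
    intro x w
    have h0 : 0 ≤ c * rexp (-‖w - x‖ ^ 2 / (2 * σ ^ 2)) * k w * (σ ^ 2)⁻¹ :=
      mul_nonneg (mul_nonneg (mul_nonneg hc0.le (Real.exp_nonneg _)) (hk0 w)) (by positivity)
    have h : F' x w = InnerProductSpace.toDual ℝ (EuclideanSpace ℝ (Fin d))
        ((c * rexp (-‖w - x‖ ^ 2 / (2 * σ ^ 2)) * k w * (σ ^ 2)⁻¹) • (w - x)) := by
      rw [hF']
      ext v
      simp [InnerProductSpace.toDual_apply_apply, real_inner_smul_left]
    rw [h, LinearIsometryEquiv.norm_map, norm_smul, Real.norm_eq_abs, abs_of_nonneg h0]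
  -- uniform bound
  have hbd : ∀ x₀ (w : EuclideanSpace ℝ (Fin d)), ∀ x ∈ Metric.ball x₀ 1,
        ‖F' x w‖ ≤ c * M * (σ ^ 2)⁻¹ * (rexp (1 / σ ^ 2) * (2 + 16 * σ ^ 2)) *
          rexp (-((8 * σ ^ 2)⁻¹ * ‖w - x₀‖ ^ 2)) := by
      intro x₀ w x hx
      rw [Metric.mem_ball, dist_eq_norm] at hx
      have hr1 : ‖w - x₀‖ - 1 ≤ ‖w - x‖ := by
        have := norm_sub_le_norm_sub_add_norm_sub w x x₀
        linarith
      have hr2 : ‖w - x‖ ≤ ‖w - x₀‖ + 1 := by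
        have := norm_sub_le_norm_sub_add_norm_sub w x₀ x
        have h' : ‖x₀ - x‖ = ‖x - x₀‖ := norm_sub_rev _ _
        linarith
      have hch := auxChain σ hσ (norm_nonneg (w - x₀)) (norm_nonneg (w - x)) hr1 hr2
      rw [hF'norm x w]
      calc c * rexp (-‖w - x‖ ^ 2 / (2 * σ ^ 2)) * k w * (σ ^ 2)⁻¹ * ‖w - x‖
          ≤ c * rexp (-‖w - x‖ ^ 2 / (2 * σ ^ 2)) * M * (σ ^ 2)⁻¹ * ‖w - x‖ := by
            exact mul_le_mul_of_nonneg_right (mul_le_mul_of_nonneg_right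
              (mul_le_mul_of_nonneg_left (hkM w) (by positivity))
              (by positivity)) (norm_nonneg _)
        _ = (c * M * (σ ^ 2)⁻¹) * (rexp (-‖w - x‖ ^ 2 / (2 * σ ^ 2)) * ‖w - x‖) := by ring
        _ ≤ (c * M * (σ ^ 2)⁻¹) *
              (rexp (1 / σ ^ 2) * (2 + 16 * σ ^ 2) * rexp (-((8 * σ ^ 2)⁻¹ * ‖w - x₀‖ ^ 2))) := by
            exact mul_le_mul_of_nonneg_left hch (by positivity)
        _ = c * M * (σ ^ 2)⁻¹ * (rexp (1 / σ ^ 2) * (2 + 16 * σ ^ 2)) *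
              rexp (-((8 * σ ^ 2)⁻¹ * ‖w - x₀‖ ^ 2)) := by ring
  -- the key differentiation under the integral sign
  have key : ∀ x₀ : EuclideanSpace ℝ (Fin d),
      HasFDerivAt (gaussSmooth d σ k) (∫ w, F' x₀ w) x₀ := by
    intro x₀
    have hdiff : ∀ (w : EuclideanSpace ℝ (Fin d)), ∀ x ∈ Metric.ball x₀ 1,
        HasFDerivAt (fun x => c * rexp (-‖w - x‖ ^ 2 / (2 * σ ^ 2)) * k w) (F' x w) x := by
      intro w x _
      have h1 : HasFDerivAt (fun x : EuclideanSpace ℝ (Fin d) => w - x)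
          (-(ContinuousLinearMap.id ℝ _)) x := (hasFDerivAt_id x).const_sub w
      have h2 := h1.norm_sq
      have h3 := (h2.const_mul (-(2 * σ ^ 2)⁻¹)).exp
      have h4 := (h3.const_mul c).mul_const (k w)
      have hfun : ∀ y : EuclideanSpace ℝ (Fin d),
          -(2 * σ ^ 2)⁻¹ * ‖w - y‖ ^ 2 = -‖w - y‖ ^ 2 / (2 * σ ^ 2) := fun y => by ring
      simp_rw [hfun] at h4
      refine h4.congr_fderiv ?_
      ext v
      simp only [hF', ContinuousLinearMap.coe_smul', Pi.smul_apply,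
        ContinuousLinearMap.smul_apply, ContinuousLinearMap.comp_apply,
        ContinuousLinearMap.neg_apply, ContinuousLinearMap.coe_id', id_eq, map_neg,
        innerSL_apply_apply, smul_eq_mul, two_smul]
      field_simp
      simp only [ContinuousLinearMap.add_apply, ContinuousLinearMap.comp_apply,
        ContinuousLinearMap.neg_apply, ContinuousLinearMap.coe_id', id_eq, map_neg,
        innerSL_apply_apply, inner_neg_right]
      ring
    have := hasFDerivAt_integral_of_dominated_of_fderiv_le (𝕜 := ℝ)
      (F := fun x w => c * rexp (-‖w - x‖ ^ 2 / (2 * σ ^ 2)) * k w)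
      (F' := F') (x₀ := x₀) (bound := fun w =>
        c * M * (σ ^ 2)⁻¹ * (rexp (1 / σ ^ 2) * (2 + 16 * σ ^ 2)) *
          rexp (-((8 * σ ^ 2)⁻¹ * ‖w - x₀‖ ^ 2)))
      (Metric.ball_mem_nhds x₀ one_pos) (Filter.Eventually.of_forall fun x => hFmeas x) (hFint x₀) (hF'meas x₀)
      (Filter.Eventually.of_forall (hbd x₀))
      (((auxGaussInt d (by positivity) x₀).const_mul _))
      (Filter.Eventually.of_forall hdiff)
    exact this
  refine ⟨fun x => (key x).differentiableAt, fun μ => ?_⟩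
  set G : EuclideanSpace ℝ (Fin d) → EuclideanSpace ℝ (Fin d) := fun w =>
    (c * rexp (-‖w - μ‖ ^ 2 / (2 * σ ^ 2)) * k w) • ((σ ^ 2)⁻¹ • (w - μ)) with hG
  have hnormG : ∀ w, ‖G w‖ = ‖F' μ w‖ := by
    intro w
    rw [hG, hF'norm μ w, norm_smul, norm_smul, Real.norm_eq_abs, Real.norm_eq_abs,
      abs_of_nonneg (mul_nonneg (mul_nonneg hc0.le (Real.exp_nonneg _)) (hk0 w)),
      abs_of_nonneg (by positivity : (0:ℝ) ≤ (σ ^ 2)⁻¹)]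
    ring
  have hBint : Integrable (fun w : EuclideanSpace ℝ (Fin d) =>
      c * M * (σ ^ 2)⁻¹ * (rexp (1 / σ ^ 2) * (2 + 16 * σ ^ 2)) *
        rexp (-((8 * σ ^ 2)⁻¹ * ‖w - μ‖ ^ 2))) volume :=
    (auxGaussInt d (by positivity) μ).const_mul _
  have hF'int : Integrable (fun w => F' μ w) volume :=
    Integrable.mono' hBint (hF'meas μ)
      (Filter.Eventually.of_forall fun w => hbd μ w μ (Metric.mem_ball_self one_pos))
  have hGmeas : AEStronglyMeasurable G volume := by
    apply AEStronglyMeasurable.smul (f := fun w => c * rexp (-‖w - μ‖ ^ 2 / (2 * σ ^ 2)) * k w)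
      (g := fun w => (σ ^ 2)⁻¹ • (w - μ))
    · exact ((hcont μ).measurable.mul hmeas).aestronglyMeasurable
    · exact (by fun_prop : Continuous fun w : EuclideanSpace ℝ (Fin d) => (σ ^ 2)⁻¹ • (w - μ)).aestronglyMeasurable
  have hGint : Integrable G volume := by
    apply Integrable.mono' hBint hGmeas
    filter_upwards with w
    rw [hnormG w]
    exact hbd μ w μ (Metric.mem_ball_self one_pos)
  have hgrad : fderiv ℝ (gaussSmooth d σ k) μ = ∫ w, F' μ w := (key μ).fderiv
  show (InnerProductSpace.toDual ℝ (EuclideanSpace ℝ (Fin d))).symm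
      (fderiv ℝ (gaussSmooth d σ k) μ) = ∫ w, G w
  have hEq : (∫ w, F' μ w) =
      InnerProductSpace.toDual ℝ (EuclideanSpace ℝ (Fin d)) (∫ w, G w) := by
    ext v
    rw [ContinuousLinearMap.integral_apply hF'int, InnerProductSpace.toDual_apply_apply]
    rw [real_inner_comm, ← integral_inner hGint]
    congr 1
    ext w
    rw [hF', hG]
    simp only [ContinuousLinearMap.smul_apply, innerSL_apply_apply, smul_eq_mul,
      real_inner_smul_right]
    rw [real_inner_comm]
    ring
  rw [hgrad, hEq, LinearIsometryEquiv.symm_apply_apply]
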